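/- Let R be a partial order on a finite set X. Then the choice function f_R defined by f_R(A) = {maximal elements of A with respect to R} satisfies the path independence condition f_R(A∪B) = f_R(f_R(A)∪B) for all A,B ⊆ X. -/

import Mathlib

open Set

variable {X Y Z : Type*}

/-- A choice function: `f A ⊆ A` for all `A`. -/
def IsChoice (f : Set X → Set X) : Prop := ∀ A, f A ⊆ A

/-- A Plott function: choice function satisfying path independence. -/
def IsPlott (f : Set X → Set X) : Prop :=
  IsChoice f ∧ ∀ A B : Set X, f (A ∪ B) = f (f A ∪ B)

/-- maximization of a partial order satisfies path independence. -/
theorem partialOrder_max_path_independent {X : Type*} [Fintype X]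
    (r : X → X → Prop) (hr : IsPartialOrder X r)
    (f : Set X → Set X)
    (hdef : ∀ A : Set X, f A = {a ∈ A | ∀ b ∈ A, r a b → a = b}) :
    ∀ A B : Set X, f (A ∪ B) = f (f A ∪ B) := by
  have hrefl : ∀ a, r a a := hr.refl
  have htrans : ∀ a b c, r a b → r b c → r a c := fun a b c => hr.trans a b c
  have hanti : ∀ a b, r a b → r b a → a = b := fun a b => hr.antisymm a b
  -- every element of a set is dominated by a maximal element of that set
  have hmax : ∀ (A : Set X), ∀ b ∈ A, ∃ c ∈ A, r b c ∧ ∀ d ∈ A, r c d → c = d := by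
    intro A b hb
    letI : PartialOrder X :=
      { le := r, le_refl := hrefl, le_trans := htrans, le_antisymm := hanti }
    obtain ⟨c, hc, hcmax⟩ := Set.Finite.exists_maximalFor (id : X → X)
      {c | c ∈ A ∧ r b c} (Set.toFinite _) ⟨b, hb, hrefl b⟩
    exact ⟨c, hc.1, hc.2, fun d hd hcd => hanti _ _ hcd (hcmax ⟨hd, htrans _ _ _ hc.2 hcd⟩ hcd)⟩
  intro A B
  ext a
  simp only [hdef, Set.mem_setOf_eq, Set.mem_union] at *
  constructor
  · rintro ⟨hab, hmaxa⟩
    rcases hab with ha | hb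
    · refine ⟨Or.inl ⟨ha, fun b hb hrab => hmaxa b (Or.inl hb) hrab⟩, ?_⟩
      rintro b (⟨hbA, _⟩ | hbB) hrab
      · exact hmaxa b (Or.inl hbA) hrab
      · exact hmaxa b (Or.inr hbB) hrab
    · refine ⟨Or.inr hb, ?_⟩
      rintro b (⟨hbA, _⟩ | hbB) hrab
      · exact hmaxa b (Or.inl hbA) hrab
      · exact hmaxa b (Or.inr hbB) hrab
  · rintro ⟨hab, hmaxa⟩
    have haAB : a ∈ A ∨ a ∈ B := by
      rcases hab with ⟨haA, _⟩ | hB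
      · exact Or.inl haA
      · exact Or.inr hB
    refine ⟨haAB, ?_⟩
    rintro b (hbA | hbB) hrab
    · obtain ⟨c, hcA, hrbc, hcmax⟩ := hmax A b hbA
      have hac : a = c := hmaxa c (Or.inl ⟨hcA, hcmax⟩) (htrans _ _ _ hrab hrbc)
      subst hac
      exact hanti _ _ hrab hrbc
    · exact hmaxa b (Or.inr hbB) hrab
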